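/- arXiv:1705.00289 — 2 statements merged into one kernel-verified Lean document; each statement's English description precedes it below -/
import Mathlib

section
/- The Laplace transform of the density f_Θ(θ) = λ^α (θ−λ)^{-α}/(θ Γ(1−α)Γ(α)) on θ ∈ (λ,∞) is L_Θ(s) = Γ(α, λs)/Γ(α), where Γ(α,x) = ∫_x^∞ t^{α-1} e^{-t} dt is the upper incomplete gamma function. -/
open MeasureTheory Real Set

set_option maxHeartbeats 1000000

lemma myIntegral_Ioi_comp_sub (g : ℝ → ℝ) (a : ℝ) :
    ∫ x in Set.Ioi a, g (x - a) = ∫ x in Set.Ioi (0:ℝ), g x := by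
  rw [← integral_indicator measurableSet_Ioi, ← integral_indicator measurableSet_Ioi,
    ← integral_sub_right_eq_self ((Set.Ioi (0:ℝ)).indicator g) a]
  congr 1
  ext x
  simp [Set.indicator_apply, Set.mem_Ioi, sub_pos]

lemma myIntegrableOn_Ioi_comp_sub {g : ℝ → ℝ} (a : ℝ)
    (h : IntegrableOn g (Set.Ioi (0:ℝ))) :
    IntegrableOn (fun x => g (x - a)) (Set.Ioi a) := by
  refine (integrable_indicator_iff (measurableSet_Ioi (a := a))).mp ?_
  have h' : Integrable ((Set.Ioi (0:ℝ)).indicator g) := by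
    rwa [integrable_indicator_iff measurableSet_Ioi]
  refine (h'.comp_sub_right a).congr (Filter.Eventually.of_forall fun x => ?_)
  simp [Set.indicator_apply, Set.mem_Ioi, sub_pos]

lemma myIntegrableOn_rpow_exp {β b : ℝ} (hβ : 0 < β) (hb : 0 < b) :
    IntegrableOn (fun u : ℝ => u ^ (β - 1) * Real.exp (-(b * u))) (Set.Ioi 0) := by
  have h := Real.GammaIntegral_convergent hβ
  have h' : IntegrableOn (fun x : ℝ => Real.exp (-(b * x)) * (b * x) ^ (β - 1))
      (Set.Ioi 0) :=
    (integrableOn_Ioi_comp_mul_left_iff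
      (fun x : ℝ => Real.exp (-x) * x ^ (β - 1)) 0 hb).mpr (by rwa [mul_zero])
  refine IntegrableOn.congr_fun (h'.const_mul ((b ^ (β - 1))⁻¹))
    (fun u hu => ?_) measurableSet_Ioi
  have hbu : (b * u) ^ (β - 1) = b ^ (β - 1) * u ^ (β - 1) :=
    Real.mul_rpow hb.le (le_of_lt hu)
  have hbne : b ^ (β - 1) ≠ 0 := (Real.rpow_pos_of_pos hb _).ne'
  field_simp [hbu]
  rw [hbu]

/-- The Laplace transform of the mixing density
`f_Θ θ = λ^α (θ-λ)^(-α) / (θ Γ(1-α) Γ α)` on `θ ∈ (λ, ∞)` is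
`L_Θ s = Γ(α, λ s)/Γ(α)`, where `Γ(α, x) = ∫_x^∞ t^(α-1) e^(-t) dt` is the
upper incomplete gamma function. -/
theorem laplace_of_gamma_mixing_density
    (α l : ℝ) (hα0 : 0 < α) (hα1 : α < 1) (hl : 0 < l) :
    ∀ s : ℝ, 0 ≤ s →
      (∫ θ in Set.Ioi l,
          Real.exp (-(s * θ)) *
            (l ^ α * (θ - l) ^ (-α) / (θ * Real.Gamma (1 - α) * Real.Gamma α)))
        = (∫ t in Set.Ioi (l * s), t ^ (α - 1) * Real.exp (-t)) / Real.Gamma α := by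
  intro s hs
  have h1α : 0 < 1 - α := by linarith
  have hΓ1 : 0 < Real.Gamma (1 - α) := Real.Gamma_pos_of_pos h1α
  have hΓα : 0 < Real.Gamma α := Real.Gamma_pos_of_pos hα0
  set c : ℝ := l ^ α / (Real.Gamma (1 - α) * Real.Gamma α) with hc
  set f : ℝ → ℝ → ℝ := fun θ v => Real.exp (-(θ * v)) * (θ - l) ^ (-α) with hfdef
  -- pointwise identity relating a translated Gamma-integrand to `f · v`
  have hptw : ∀ v θ : ℝ,
      Real.exp (-(l * v)) * ((θ - l) ^ ((1 - α) - 1) * Real.exp (-(v * (θ - l))))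
        = f θ v := by
    intro v θ
    have h2 : Real.exp (-(l * v)) * Real.exp (-(v * (θ - l))) = Real.exp (-(θ * v)) := by
      rw [← Real.exp_add]; congr 1; ring
    calc Real.exp (-(l * v)) * ((θ - l) ^ ((1 - α) - 1) * Real.exp (-(v * (θ - l))))
        = (Real.exp (-(l * v)) * Real.exp (-(v * (θ - l)))) * (θ - l) ^ ((1 - α) - 1) := by
          ring
      _ = Real.exp (-(θ * v)) * (θ - l) ^ (-α) := by
          rw [h2, show (1 - α) - 1 = -α by ring]
  -- integrability of the θ-sections for v > 0
  have hsec : ∀ v : ℝ, 0 < v → IntegrableOn (fun θ => f θ v) (Set.Ioi l) := by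
    intro v hv
    have hg : IntegrableOn (fun u : ℝ => Real.exp (-(l * v)) *
        (u ^ ((1 - α) - 1) * Real.exp (-(v * u)))) (Set.Ioi 0) :=
      (myIntegrableOn_rpow_exp h1α hv).const_mul _
    exact (myIntegrableOn_Ioi_comp_sub l hg).congr_fun
      (fun θ _ => hptw v θ) measurableSet_Ioi
  -- value of the θ-sections for v > 0
  have hsecval : ∀ v : ℝ, 0 < v →
      (∫ θ in Set.Ioi l, f θ v)
        = Real.exp (-(l * v)) * ((1 / v) ^ (1 - α) * Real.Gamma (1 - α)) := by
    intro v hv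
    have h1 : (∫ θ in Set.Ioi l, f θ v)
        = ∫ θ in Set.Ioi l, (fun u : ℝ => Real.exp (-(l * v)) *
            (u ^ ((1 - α) - 1) * Real.exp (-(v * u)))) (θ - l) :=
      setIntegral_congr_fun measurableSet_Ioi fun θ _ => (hptw v θ).symm
    rw [h1, myIntegral_Ioi_comp_sub
      (fun u : ℝ => Real.exp (-(l * v)) * (u ^ ((1 - α) - 1) * Real.exp (-(v * u)))) l,
      integral_const_mul, integral_rpow_mul_exp_neg_mul_Ioi h1α hv]
  -- joint measurability
  have hmeas : AEStronglyMeasurable (Function.uncurry f)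
      ((volume.restrict (Set.Ioi l)).prod (volume.restrict (Set.Ioi s))) := by
    rw [Measure.prod_restrict]
    refine ContinuousOn.aestronglyMeasurable ?_ (measurableSet_Ioi.prod measurableSet_Ioi)
    intro p hp
    have h1 : ContinuousAt (fun p : ℝ × ℝ => Real.exp (-(p.1 * p.2))) p :=
      (Real.continuous_exp.comp (continuous_fst.mul continuous_snd).neg).continuousAt
    have h2 : ContinuousAt (fun p : ℝ × ℝ => (p.1 - l) ^ (-α)) p := by
      have hne : p.1 - l ≠ 0 := sub_ne_zero.mpr (ne_of_gt hp.1)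
      exact ContinuousAt.rpow_const
        ((continuous_fst.sub continuous_const).continuousAt) (Or.inl hne)
    exact (h1.mul h2).continuousWithinAt
  -- integrability on the product
  have hInt : Integrable (Function.uncurry f)
      ((volume.restrict (Set.Ioi l)).prod (volume.restrict (Set.Ioi s))) := by
    rw [integrable_prod_iff' hmeas]
    constructor
    · filter_upwards [ae_restrict_mem measurableSet_Ioi] with v hv
      exact hsec v (lt_of_le_of_lt hs hv)
    · have hval : ∀ᵐ v ∂(volume.restrict (Set.Ioi s)),
          Real.exp (-(l * v)) * ((1 / v) ^ (1 - α) * Real.Gamma (1 - α))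
            = ∫ θ in Set.Ioi l, ‖f θ v‖ := by
        filter_upwards [ae_restrict_mem measurableSet_Ioi] with v hv
        have hv0 : 0 < v := lt_of_le_of_lt hs hv
        have : (∫ θ in Set.Ioi l, ‖f θ v‖) = ∫ θ in Set.Ioi l, f θ v := by
          refine setIntegral_congr_fun measurableSet_Ioi fun θ hθ => ?_
          have h1 : (0:ℝ) ≤ f θ v := by
            have : (0:ℝ) < (θ - l) ^ (-α) :=
              Real.rpow_pos_of_pos (sub_pos.mpr hθ) _
            positivity
          exact Real.norm_of_nonneg h1
        rw [this, hsecval v hv0]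
      refine Integrable.congr ?_ hval
      have hbase : IntegrableOn (fun v : ℝ => v ^ (α - 1) * Real.exp (-(l * v)))
          (Set.Ioi s) :=
        (myIntegrableOn_rpow_exp hα0 hl).mono_set (Set.Ioi_subset_Ioi hs)
      have hbase2 : IntegrableOn (fun v : ℝ => Real.Gamma (1 - α) *
          (v ^ (α - 1) * Real.exp (-(l * v)))) (Set.Ioi s) :=
        hbase.const_mul (Real.Gamma (1 - α))
      refine hbase2.congr_fun (fun v hv => ?_) measurableSet_Ioi
      have hv0 : 0 < v := lt_of_le_of_lt hs hv
      have hvp : (1 / v) ^ (1 - α) = v ^ (α - 1) := by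
        rw [one_div, Real.inv_rpow hv0.le, ← Real.rpow_neg hv0.le, neg_sub]
      rw [hvp]; ring
  -- the chain of equalities
  have hstep1 : ∀ θ ∈ Set.Ioi l,
      Real.exp (-(s * θ)) *
          (l ^ α * (θ - l) ^ (-α) / (θ * Real.Gamma (1 - α) * Real.Gamma α))
        = c * ∫ v in Set.Ioi s, f θ v := by
    intro θ hθ
    have hθ0 : 0 < θ := lt_trans hl hθ
    have hI : (∫ v in Set.Ioi s, Real.exp (-(θ * v))) = θ⁻¹ * Real.exp (-(θ * s)) := by
      have := integral_comp_mul_left_Ioi (fun x => Real.exp (-x)) s hθ0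
      simp only [smul_eq_mul] at this
      rw [integral_exp_neg_Ioi] at this
      exact this
    have hIv : (∫ v in Set.Ioi s, f θ v)
        = θ⁻¹ * Real.exp (-(θ * s)) * (θ - l) ^ (-α) := by
      simp only [hfdef]
      rw [MeasureTheory.integral_mul_const, hI]
    rw [hIv, hc, mul_comm s θ]
    have hθne : θ ≠ 0 := hθ0.ne'
    field_simp
  have hswap := MeasureTheory.integral_integral_swap hInt
  -- final scaling identity
  have hfin := integral_comp_mul_left_Ioi (fun t => t ^ (α - 1) * Real.exp (-t)) s hl
  rw [smul_eq_mul] at hfin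
  have hJ : (∫ v in Set.Ioi s, (l * v) ^ (α - 1) * Real.exp (-(l * v)))
      = l ^ (α - 1) * ∫ v in Set.Ioi s, v ^ (α - 1) * Real.exp (-(l * v)) := by
    rw [← integral_const_mul]
    refine setIntegral_congr_fun measurableSet_Ioi fun v hv => ?_
    have hv0 : 0 < v := lt_of_le_of_lt hs hv
    rw [Real.mul_rpow hl.le hv0.le]; ring
  have hK : (∫ v in Set.Ioi s, Real.exp (-(l * v)) *
        ((1 / v) ^ (1 - α) * Real.Gamma (1 - α)))
      = Real.Gamma (1 - α) * ∫ v in Set.Ioi s, v ^ (α - 1) * Real.exp (-(l * v)) := by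
    rw [← integral_const_mul]
    refine setIntegral_congr_fun measurableSet_Ioi fun v hv => ?_
    have hv0 : 0 < v := lt_of_le_of_lt hs hv
    have hvp : (1 / v) ^ (1 - α) = v ^ (α - 1) := by
      rw [one_div, Real.inv_rpow hv0.le, ← Real.rpow_neg hv0.le, neg_sub]
    rw [hvp]; ring
  calc (∫ θ in Set.Ioi l,
          Real.exp (-(s * θ)) *
            (l ^ α * (θ - l) ^ (-α) / (θ * Real.Gamma (1 - α) * Real.Gamma α)))
      = ∫ θ in Set.Ioi l, c * ∫ v in Set.Ioi s, f θ v :=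
        setIntegral_congr_fun measurableSet_Ioi hstep1
    _ = c * ∫ θ in Set.Ioi l, ∫ v in Set.Ioi s, f θ v := integral_const_mul c _
    _ = c * ∫ v in Set.Ioi s, ∫ θ in Set.Ioi l, f θ v := by rw [hswap]
    _ = c * ∫ v in Set.Ioi s, Real.exp (-(l * v)) *
          ((1 / v) ^ (1 - α) * Real.Gamma (1 - α)) := by
        congr 1
        exact setIntegral_congr_fun measurableSet_Ioi
          fun v hv => hsecval v (lt_of_le_of_lt hs hv)
    _ = (∫ t in Set.Ioi (l * s), t ^ (α - 1) * Real.exp (-t)) / Real.Gamma α := by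
        have hfin' : (∫ t in Set.Ioi (l * s), t ^ (α - 1) * Real.exp (-t))
            = l * ∫ v in Set.Ioi s, (l * v) ^ (α - 1) * Real.exp (-(l * v)) := by
          have h := hfin
          rw [h]
          field_simp
        have hlow : l ^ (α - 1) * l = l ^ α := by
          rw [← Real.rpow_add_one hl.ne' (α - 1), sub_add_cancel]
        rw [hK, hfin', hJ, hc, ← hlow]
        field_simp
end

section
/- With Lévy mixing density f_Θ(θ)=λ/(2√(πθ³))e^{-λ²/(4θ)}, the density of Sₙ under the exponential mixture model equals f_{Sₙ}(x) = λ^{n+1/2}/(2^{n-1/2}√π Γ(n)) · x^{n/2 − 3/4} K_{n−1/2}(λ√x) for x ≥ 0, where K_ν is the modified Bessel function of the third kind. -/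
open MeasureTheory Real Set

noncomputable def besselK (ν x : ℝ) : ℝ :=
  ∫ t in Set.Ioi (0 : ℝ), Real.exp (-(x * Real.cosh t)) * Real.cosh (ν * t)


lemma key_bound (p c : ℝ) (hc : 0 < c) (u : ℝ) :
    p * u - c * Real.cosh u ≤ 2*(|p|+1)^2/c - |u| := by
  have h3 : Real.exp |u| ≥ (1 + |u|/2)^2 := by
    have h := Real.add_one_le_exp (|u|/2)
    have h4 : Real.exp (|u|/2) * Real.exp (|u|/2) = Real.exp |u| := by
      rw [← Real.exp_add]; ring_nf
    nlinarith [Real.exp_pos (|u|/2), abs_nonneg u]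
  have h5 : Real.exp u + Real.exp (-u) ≥ Real.exp |u| := by
    rcases abs_cases u with ⟨h,_⟩|⟨h,_⟩ <;> rw [h] <;>
      nlinarith [Real.exp_pos u, Real.exp_pos (-u)]
  have h1 : Real.cosh u ≥ |u|^2 / 8 := by
    rw [Real.cosh_eq]; nlinarith [abs_nonneg u]
  have h6 : p * u ≤ |p| * |u| := (le_abs_self _).trans_eq (abs_mul p u)
  have hq : c * ((|p|+1) * |u|) ≤ c^2*|u|^2/8 + 2*(|p|+1)^2 := by
    nlinarith [sq_nonneg (c * |u| - 4*(|p|+1))]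
  have h7 : c * Real.cosh u ≥ c * (|u|^2/8) :=
    mul_le_mul_of_nonneg_left h1 hc.le
  have h8 : (|p|+1) * |u| ≤ c*|u|^2/8 + 2*(|p|+1)^2/c := by
    have h9 : c*((|p|+1) * |u|)/c ≤ (c^2*|u|^2/8 + 2*(|p|+1)^2)/c :=
      (div_le_div_iff_of_pos_right hc).mpr hq
    rw [mul_comm c, mul_div_assoc, div_self hc.ne', mul_one] at h9
    calc (|p|+1) * |u| ≤ (c^2*|u|^2/8 + 2*(|p|+1)^2)/c := h9
      _ = c*|u|^2/8 + 2*(|p|+1)^2/c := by field_simp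
  nlinarith [abs_nonneg u, abs_nonneg p]

lemma integrable_kernel (p c : ℝ) (hc : 0 < c) :
    Integrable (fun u : ℝ => Real.exp (p * u - c * Real.cosh u)) := by
  have cont : Continuous fun u : ℝ => Real.exp (p * u - c * Real.cosh u) := by
    continuity
  set A := 2*(|p|+1)^2/c with hA
  rw [← integrableOn_univ, ← Set.Iic_union_Ioi (a := (0:ℝ)), integrableOn_union]
  constructor
  · refine Integrable.mono' (((integrableOn_exp_Iic 0).const_mul (Real.exp A)))
      cont.aestronglyMeasurable.restrict ?_
    filter_upwards [ae_restrict_mem measurableSet_Iic] with u hu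
    rw [Real.norm_eq_abs, Real.abs_exp, ← Real.exp_add]
    refine Real.exp_le_exp.mpr ?_
    have := key_bound p c hc u
    rw [abs_of_nonpos (mem_Iic.mp hu)] at this
    linarith
  · have hg : IntegrableOn (fun u : ℝ => Real.exp A * Real.exp (-u)) (Ioi 0) := by
      have h := ((exp_neg_integrableOn_Ioi 0 one_pos).const_mul (Real.exp A))
      simp only [neg_mul, one_mul] at h
      exact h
    refine Integrable.mono' hg cont.aestronglyMeasurable.restrict ?_
    filter_upwards [ae_restrict_mem measurableSet_Ioi] with u hu
    rw [Real.norm_eq_abs, Real.abs_exp, ← Real.exp_add]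
    refine Real.exp_le_exp.mpr ?_
    have := key_bound p c hc u
    rw [abs_of_nonneg (le_of_lt (mem_Ioi.mp hu))] at this
    linarith

lemma bessel_formula (p a b : ℝ) (ha : 0 < a) (hb : 0 < b) :
    ∫ θ in Set.Ioi (0:ℝ), θ ^ (p - 1) * Real.exp (-(a*θ) - b/θ)
      = 2 * (Real.sqrt (b/a)) ^ p * besselK p (2 * Real.sqrt (a*b)) := by
  set s := Real.sqrt (b/a) with hs_def
  set c := 2 * Real.sqrt (a*b) with hc_def
  have hs : 0 < s := Real.sqrt_pos.mpr (div_pos hb ha)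
  have hab : 0 < Real.sqrt (a*b) := Real.sqrt_pos.mpr (mul_pos ha hb)
  have hc : 0 < c := by positivity
  have has : a * s = Real.sqrt (a*b) := by
    rw [hs_def, ← Real.sqrt_sq ha.le, ← Real.sqrt_mul (sq_nonneg a)]
    congr 1
    field_simp
    rw [Real.sq_sqrt (sq_nonneg a)]
  have hbs : b / s = Real.sqrt (a*b) := by
    have hkey : s * Real.sqrt (a*b) = b := by
      rw [hs_def, ← Real.sqrt_mul (div_nonneg hb.le ha.le),
        show b/a*(a*b) = b^2 by field_simp, Real.sqrt_sq hb.le]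
    rw [div_eq_iff hs.ne', mul_comm]
    exact hkey.symm
  set g : ℝ → ℝ := fun θ => θ ^ (p - 1) * Real.exp (-(a*θ) - b/θ) with hg_def
  have hd : ∀ x ∈ (Set.univ : Set ℝ), HasDerivWithinAt Real.exp (Real.exp x) Set.univ x :=
    fun x _ => (Real.hasDerivAt_exp x).hasDerivWithinAt
  have himg := integral_image_eq_integral_abs_deriv_smul MeasurableSet.univ hd
      Real.exp_injective.injOn g
  rw [Set.image_univ, Real.range_exp, Measure.restrict_univ] at himg
  have hshift := integral_add_right_eq_self (μ := volume)
    (fun u => |Real.exp u| • g (Real.exp u)) (Real.log s)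
  have hpt : ∀ u : ℝ, |Real.exp (u + Real.log s)| • g (Real.exp (u + Real.log s))
      = s ^ p * Real.exp (p * u - c * Real.cosh u) := by
    intro u
    have ht : Real.exp (u + Real.log s) = s * Real.exp u := by
      rw [Real.exp_add, Real.exp_log hs]; ring
    have htpos : (0:ℝ) < s * Real.exp u := by positivity
    rw [ht, hg_def]
    simp only [smul_eq_mul, abs_of_pos htpos]
    have h1 : (s * Real.exp u) ^ (p - 1) = (s * Real.exp u) ^ p / (s * Real.exp u) := by
      rw [Real.rpow_sub htpos, Real.rpow_one]
    have h2 : (s * Real.exp u) ^ p = s ^ p * Real.exp (p * u) := by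
      rw [Real.mul_rpow hs.le (Real.exp_pos u).le, Real.rpow_def_of_pos (Real.exp_pos u),
        Real.log_exp, mul_comm u p]
    have h3 : -(a * (s * Real.exp u)) - b / (s * Real.exp u)
        = -(c * Real.cosh u) := by
      rw [Real.cosh_eq, hc_def]
      have : b / (s * Real.exp u) = (b / s) * Real.exp (-u) := by
        rw [Real.exp_neg]; field_simp
      rw [this, hbs]
      have : a * (s * Real.exp u) = (a * s) * Real.exp u := by ring
      rw [this, has]
      ring
    rw [h1, h2, h3, Real.exp_sub, Real.exp_neg]
    field_simp
  have hker := integrable_kernel p c hc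
  have hkerneg := integrable_kernel (-p) c hc
  have hsplit : ∫ u : ℝ, Real.exp (p * u - c * Real.cosh u)
      = (∫ u in Iic (0:ℝ), Real.exp (p * u - c * Real.cosh u))
        + ∫ u in Ioi (0:ℝ), Real.exp (p * u - c * Real.cosh u) :=
    (intervalIntegral.integral_Iic_add_Ioi hker.integrableOn hker.integrableOn).symm
  have hneg : ∫ u in Iic (0:ℝ), Real.exp (p * u - c * Real.cosh u)
      = ∫ u in Ioi (0:ℝ), Real.exp (-p * u - c * Real.cosh u) := by
    have hni := integral_comp_neg_Ioi (0:ℝ)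
      (fun u => Real.exp (p * u - c * Real.cosh u))
    rw [neg_zero] at hni
    rw [← hni]
    refine setIntegral_congr_fun measurableSet_Ioi (fun u _ => ?_)
    rw [Real.cosh_neg]
    ring_nf
  have hadd : (∫ u in Ioi (0:ℝ), Real.exp (-p * u - c * Real.cosh u))
      + ∫ u in Ioi (0:ℝ), Real.exp (p * u - c * Real.cosh u)
      = 2 * besselK p c := by
    rw [← integral_add hkerneg.integrableOn hker.integrableOn, besselK,
      ← integral_const_mul]
    refine setIntegral_congr_fun measurableSet_Ioi (fun u _ => ?_)
    rw [show -p*u - c*Real.cosh u = -(c*Real.cosh u) + -(p*u) by ring,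
      show p*u - c*Real.cosh u = -(c*Real.cosh u) + p*u by ring,
      Real.exp_add, Real.exp_add, Real.cosh_eq (p*u)]
    ring
  calc ∫ θ in Set.Ioi (0:ℝ), g θ
      = ∫ u : ℝ, |Real.exp u| • g (Real.exp u) := himg
    _ = ∫ u : ℝ, |Real.exp (u + Real.log s)| • g (Real.exp (u + Real.log s)) := hshift.symm
    _ = ∫ u : ℝ, s ^ p * Real.exp (p * u - c * Real.cosh u) := by
        congr 1; funext u; exact hpt u
    _ = s ^ p * ∫ u : ℝ, Real.exp (p * u - c * Real.cosh u) := integral_const_mul _ _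
    _ = s ^ p * (2 * besselK p c) := by rw [hsplit, hneg, hadd]
    _ = 2 * s ^ p * besselK p c := by ring


lemma sqrt_pi_cube {θ : ℝ} (hθ : 0 < θ) :
    Real.sqrt (Real.pi * θ ^ 3) = Real.sqrt Real.pi * θ ^ ((3:ℝ)/2) := by
  rw [Real.sqrt_mul Real.pi_pos.le]
  congr 1
  rw [show θ^(3:ℕ) = θ^((3:ℝ)) by
      rw [show ((3:ℝ)) = ((3:ℕ):ℝ) by norm_num, Real.rpow_natCast],
    Real.sqrt_eq_rpow, ← Real.rpow_mul hθ.le]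
  norm_num

/-- With the Lévy mixing density `f_Θ θ = λ/(2√(π θ³)) e^(-λ²/(4θ))`, the density
of `Sₙ` under the exponential mixture model,
`f_{Sₙ} x = (x^(n-1)/Γ n) ∫₀^∞ θⁿ e^(-xθ) f_Θ θ dθ`, equals
`λ^(n+1/2) / (2^(n-1/2) √π Γ n) · x^(n/2 - 3/4) K_(n-1/2) (λ √x)` for `x ≥ 0`. -/
theorem aggregated_density_levy_mixing_bessel
    (l : ℝ) (hl : 0 < l) (n : ℕ) (hn : 1 ≤ n) :
    ∀ x : ℝ, 0 ≤ x →
      x ^ (n - 1) / Real.Gamma n *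
          ∫ θ in Set.Ioi (0 : ℝ),
            θ ^ n * Real.exp (-(x * θ)) *
              (l / (2 * Real.sqrt (Real.pi * θ ^ 3)) * Real.exp (-(l ^ 2 / (4 * θ))))
        = l ^ ((n : ℝ) + 1 / 2) /
            (2 ^ ((n : ℝ) - 1 / 2) * Real.sqrt Real.pi * Real.Gamma n) *
            x ^ ((n : ℝ) / 2 - 3 / 4) * besselK ((n : ℝ) - 1 / 2) (l * Real.sqrt x) := by
  intro x hx
  have hΓ : 0 < Real.Gamma n :=
    Real.Gamma_pos_of_pos (by exact_mod_cast Nat.pos_of_ne_zero (by omega))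
  have hπ : 0 < Real.sqrt Real.pi := Real.sqrt_pos.mpr Real.pi_pos
  rcases hx.eq_or_lt with hx0 | hx0
  · -- x = 0
    subst hx0
    have hne : ((n:ℝ))/2 - 3/4 ≠ 0 := by
      intro h0
      have h2n : ((2*n : ℕ) : ℝ) = 3 := by push_cast; linarith
      have : (2*n : ℕ) = 3 := by exact_mod_cast h2n
      omega
    rcases Nat.lt_or_ge n 2 with h1 | h2
    · -- n = 1
      have hn1 : n = 1 := by omega
      subst hn1
      have hI : ∫ θ in Set.Ioi (0:ℝ), θ ^ 1 * Real.exp (-((0:ℝ) * θ)) *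
          (l / (2 * Real.sqrt (Real.pi * θ ^ 3)) * Real.exp (-(l ^ 2 / (4 * θ)))) = 0 := by
        apply integral_undef
        intro hint
        set C := l/(2*Real.sqrt Real.pi) * Real.exp (-(l^2/4)) with hC
        have hCpos : 0 < C := by positivity
        have hmono : IntegrableOn (fun θ : ℝ => θ ^ 1 * Real.exp (-((0:ℝ) * θ)) *
            (l / (2 * Real.sqrt (Real.pi * θ ^ 3)) * Real.exp (-(l ^ 2 / (4 * θ)))))
            (Set.Ioi 1) := hint.mono_measure
              (Measure.restrict_mono (Set.Ioi_subset_Ioi zero_le_one) le_rfl)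
        have hg : IntegrableOn (fun θ : ℝ => C * θ ^ (-(1:ℝ)/2)) (Set.Ioi 1) := by
          refine Integrable.mono hmono ?_ ?_
          · exact (by fun_prop : Measurable fun θ : ℝ => C * θ ^ (-(1:ℝ)/2)).aestronglyMeasurable
          · filter_upwards [ae_restrict_mem measurableSet_Ioi] with θ hθ
            have hθ1 : (1:ℝ) < θ := hθ
            have hθ0 : (0:ℝ) < θ := lt_trans one_pos hθ1
            have hsq : 0 < Real.sqrt (Real.pi * θ^3) :=
              Real.sqrt_pos.mpr (mul_pos Real.pi_pos (pow_pos hθ0 3))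
            have hr32 : 0 < θ ^ ((3:ℝ)/2) := Real.rpow_pos_of_pos hθ0 _
            have hr12 : 0 < θ ^ (-(1:ℝ)/2) := Real.rpow_pos_of_pos hθ0 _
            rw [Real.norm_eq_abs, Real.norm_eq_abs, abs_of_pos (by positivity),
              abs_of_pos (by positivity : (0:ℝ) < θ ^ 1 * Real.exp (-((0:ℝ) * θ)) *
                (l / (2 * Real.sqrt (Real.pi * θ ^ 3)) * Real.exp (-(l ^ 2 / (4 * θ)))))]
            have hE : Real.exp (-(l^2/4)) ≤ Real.exp (-(l^2/(4*θ))) := by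
              refine Real.exp_le_exp.mpr (neg_le_neg ?_)
              refine div_le_div_of_nonneg_left (sq_nonneg l) (by norm_num) (by linarith)
            have hkey : θ ^ 1 * Real.exp (-((0:ℝ) * θ)) *
                (l / (2 * Real.sqrt (Real.pi * θ ^ 3)) * Real.exp (-(l ^ 2 / (4 * θ))))
                = l/(2*Real.sqrt Real.pi) * θ ^ (-(1:ℝ)/2) * Real.exp (-(l^2/(4*θ))) := by
              have hmulpow : θ * (θ ^ ((3:ℝ)/2))⁻¹ = θ ^ (-(1:ℝ)/2) := by
                rw [← Real.rpow_neg hθ0.le]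
                nth_rewrite 1 [← Real.rpow_one θ]
                rw [← Real.rpow_add hθ0]
                norm_num
              rw [sqrt_pi_cube hθ0, show -((0:ℝ)*θ) = 0 by ring, Real.exp_zero, pow_one,
                mul_one, ← hmulpow]
              field_simp
            rw [hkey, hC]
            calc l / (2 * Real.sqrt Real.pi) * Real.exp (-(l ^ 2 / 4)) * θ ^ (-(1:ℝ)/2)
                ≤ l / (2 * Real.sqrt Real.pi) * Real.exp (-(l ^ 2 / (4*θ))) * θ ^ (-(1:ℝ)/2) := by
                  gcongr
              _ = l / (2 * Real.sqrt Real.pi) * θ ^ (-(1:ℝ)/2) * Real.exp (-(l^2/(4*θ))) := by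
                  ring
        have h2 := hg.const_mul C⁻¹
        simp only [← mul_assoc, inv_mul_cancel₀ hCpos.ne', one_mul] at h2
        have h3 : IntegrableOn (fun x : ℝ => x ^ (-(1:ℝ)/2)) (Set.Ioi 1) volume := h2
        rw [integrableOn_Ioi_rpow_iff zero_lt_one] at h3
        norm_num at h3
      rw [hI, Real.zero_rpow hne]
      simp
    · simp [zero_pow (show n-1 ≠ 0 by omega), Real.zero_rpow hne]
  · -- x > 0
    set p : ℝ := (n:ℝ) - 1/2 with hp
    have hsx : 0 < Real.sqrt x := Real.sqrt_pos.mpr hx0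
    have hIr : ∫ θ in Set.Ioi (0:ℝ), θ ^ n * Real.exp (-(x * θ)) *
          (l / (2 * Real.sqrt (Real.pi * θ ^ 3)) * Real.exp (-(l ^ 2 / (4 * θ))))
        = ∫ θ in Set.Ioi (0:ℝ),
            (l/(2*Real.sqrt Real.pi)) * (θ ^ (p - 1) * Real.exp (-(x*θ) - l^2/4/θ)) := by
      refine setIntegral_congr_fun measurableSet_Ioi (fun θ hθ => ?_)
      have hθ0 : (0:ℝ) < θ := hθ
      have hr32 : 0 < θ ^ ((3:ℝ)/2) := Real.rpow_pos_of_pos hθ0 _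
      rw [sqrt_pi_cube hθ0,
        show -(x*θ) - l^2/4/θ = (-(x*θ)) + (-(l^2/(4*θ))) by field_simp; ring,
        Real.exp_add,
        show θ ^ (p-1) = θ^((n:ℝ)) / θ^((3:ℝ)/2) by
          rw [← Real.rpow_sub hθ0]; congr 1; rw [hp]; ring,
        show θ^(n:ℕ) = θ^((n:ℝ)) from (Real.rpow_natCast θ n).symm]
      field_simp
    rw [hIr, integral_const_mul, bessel_formula p x (l^2/4) hx0 (by positivity)]
    have hsql : Real.sqrt (l^2/4) = l/2 := by
      rw [show l^2/4 = (l/2)^2 by ring, Real.sqrt_sq (by positivity)]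
    have hcarg : 2 * Real.sqrt (x * (l^2/4)) = l * Real.sqrt x := by
      rw [Real.sqrt_mul hx0.le, hsql]; ring
    have hsdiv : Real.sqrt (l^2/4/x) = (l/2) / Real.sqrt x := by
      rw [Real.sqrt_div (by positivity : (0:ℝ) ≤ l^2/4), hsql]
    rw [hcarg, hsdiv]
    have hrp : ((l/2)/Real.sqrt x)^p = (l^p/2^p) / x^(p/2) := by
      rw [Real.div_rpow (by positivity) hsx.le,
        Real.div_rpow hl.le (by norm_num : (0:ℝ) ≤ 2)]
      congr 1
      rw [Real.sqrt_eq_rpow, ← Real.rpow_mul hx0.le, show (1:ℝ)/2*p = p/2 by ring]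
    have hxpow : x^(n-1) = x ^ ((n:ℝ)-1) := by
      rw [← Real.rpow_natCast x (n-1), Nat.cast_sub hn, Nat.cast_one]
    have hxcomb : x ^ ((n:ℝ)/2 - 3/4) = x ^ ((n:ℝ)-1) / x^(p/2) := by
      rw [← Real.rpow_sub hx0]; congr 1; rw [hp]; ring
    have hl2 : l ^ ((n:ℝ)+1/2) = l * l^p := by
      rw [show (n:ℝ)+1/2 = 1 + p by rw [hp]; ring, Real.rpow_add hl, Real.rpow_one]
    rw [hxpow, hrp, hl2, hxcomb]
    have h2p : (0:ℝ) < 2^p := Real.rpow_pos_of_pos two_pos p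
    have hxp2 : (0:ℝ) < x^(p/2) := Real.rpow_pos_of_pos hx0 _
    field_simp
end
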